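/- For every β > 0, the characteristic polynomial of the 3×3 matrix N (with N₀₀ = N₁₁ = (1+β)/(4β+2), N₂₂ = 2β/(4β+2), N₀₂ = N₂₀ = N₁₂ = N₂₁ = β/(4β+2), N₀₁ = N₁₀ = 1/(4β+2)) has roots exactly β/(4β+2) and (2+3β ± √(4−4β+9β²))/(2(4β+2)). -/
import Mathlib

theorem charpoly_eval_det (M : Matrix (Fin 3) (Fin 3) ℝ) (x : ℝ) :
    M.charpoly.eval x =
      (Matrix.of ![![x - M 0 0, -M 0 1, -M 0 2], ![-M 1 0, x - M 1 1, -M 1 2],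
        ![-M 2 0, -M 2 1, x - M 2 2]]).det := by
  rw [Matrix.charpoly, ← Polynomial.coe_evalRingHom, RingHom.map_det]
  congr 1
  ext i j
  fin_cases i <;> fin_cases j <;>
    simp [Matrix.charmatrix_apply_eq, Matrix.charmatrix_apply_ne]

theorem stmt_8 (β : ℝ) (hβ : 0 < β) :
    ∀ x : ℝ,
      (Matrix.charpoly
        (!![(1 + β) / (4 * β + 2), 1 / (4 * β + 2), β / (4 * β + 2);
            1 / (4 * β + 2), (1 + β) / (4 * β + 2), β / (4 * β + 2);
            β / (4 * β + 2), β / (4 * β + 2), 2 * β / (4 * β + 2)] :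
          Matrix (Fin 3) (Fin 3) ℝ)).IsRoot x ↔
      x = β / (4 * β + 2) ∨
      x = (2 + 3 * β + Real.sqrt (4 - 4 * β + 9 * β ^ 2)) / (2 * (4 * β + 2)) ∨
      x = (2 + 3 * β - Real.sqrt (4 - 4 * β + 9 * β ^ 2)) / (2 * (4 * β + 2)) := by
  intro x
  have hd : (4 * β + 2) ≠ 0 := by positivity
  have hs2 : Real.sqrt (4 - 4 * β + 9 * β ^ 2) ^ 2 = 4 - 4 * β + 9 * β ^ 2 :=
    Real.sq_sqrt (by nlinarith)
  have key : (Matrix.charpoly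
        (!![(1 + β) / (4 * β + 2), 1 / (4 * β + 2), β / (4 * β + 2);
            1 / (4 * β + 2), (1 + β) / (4 * β + 2), β / (4 * β + 2);
            β / (4 * β + 2), β / (4 * β + 2), 2 * β / (4 * β + 2)] :
          Matrix (Fin 3) (Fin 3) ℝ)).eval x =
      (x - β / (4 * β + 2)) *
      ((x - (2 + 3 * β + Real.sqrt (4 - 4 * β + 9 * β ^ 2)) / (2 * (4 * β + 2))) *
       (x - (2 + 3 * β - Real.sqrt (4 - 4 * β + 9 * β ^ 2)) / (2 * (4 * β + 2)))) := by
    rw [charpoly_eval_det, Matrix.det_fin_three]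
    simp only [Matrix.of_apply, Matrix.cons_val', Matrix.cons_val_zero, Matrix.cons_val_one,
      Matrix.head_cons, Matrix.empty_val', Matrix.cons_val_fin_one, Matrix.head_fin_const,
      Matrix.cons_val_two, Matrix.tail_cons]
    field_simp
    ring_nf
    ring_nf at hs2
    rw [hs2]
    ring
  rw [Polynomial.IsRoot, key, mul_eq_zero, mul_eq_zero, sub_eq_zero, sub_eq_zero, sub_eq_zero]
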